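/- Let E ∈ ℝ^{N×N} be symmetric negative semidefinite with a one-dimensional kernel spanned by a positive vector v_r. Let V(x) = Σᵢ [−2xᵢ − 2 ln(1 − xᵢ)] defined on the set S = { x ∈ ℝᴺ : −1 ≤ xᵢ ≤ 1 − ε } for some 0 < ε < 2. Then along any solution of ẋ = ½(I − diag(x)) E x staying in S, the derivative of V satisfies d/dt V(x(t)) = x(t)ᵀ E x(t) ≤ 0, with equality at time t if and only if x(t) is a scalar multiple of v_r. -/

import Mathlib

open Matrix

lemma aux_c_zero (c d : ℝ) (h : ∀ t : ℝ, 2 * t * c + t ^ 2 * d ≤ 0) : c = 0 := by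
  by_contra hc
  have h1 : (0:ℝ) < 1 + |d| := by positivity
  set t : ℝ := c / (1 + |d|) with htdef
  have ht : t * (1 + |d|) = c := by
    rw [htdef, div_mul_cancel₀ _ (ne_of_gt h1)]
  have h2 := h t
  have hdabs : -(1 + |d|) ≤ d := by
    have := neg_abs_le d; linarith
  have htne : t ≠ 0 := by
    intro h0; rw [h0] at ht; simp at ht; exact hc ht.symm
  have ht2 : 0 < t ^ 2 := by positivity
  have hpos : (0:ℝ) < 2 * (1 + |d|) + d := by
    have := neg_abs_le d; linarith
  have hc2 : 2 * t * c = 2 * t ^ 2 * (1 + |d|) := by rw [← ht]; ring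
  nlinarith [mul_pos ht2 hpos, hc2, h2]

lemma aux_ker (N : ℕ) (E : Matrix (Fin N) (Fin N) ℝ)
    (hsym : Eᵀ = E)
    (hnsd : ∀ y : Fin N → ℝ, y ⬝ᵥ (E *ᵥ y) ≤ 0)
    (v : Fin N → ℝ) (hv : v ⬝ᵥ (E *ᵥ v) = 0) : E *ᵥ v = 0 := by
  have hsymdot : ∀ a b : Fin N → ℝ, a ⬝ᵥ (E *ᵥ b) = b ⬝ᵥ (E *ᵥ a) := by
    intro a b
    rw [dotProduct_mulVec, ← mulVec_transpose, hsym, dotProduct_comm]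
  have hc : ∀ y : Fin N → ℝ, v ⬝ᵥ (E *ᵥ y) = 0 := by
    intro y
    apply aux_c_zero _ (y ⬝ᵥ (E *ᵥ y))
    intro t
    have := hnsd (v + t • y)
    have hexp : (v + t • y) ⬝ᵥ (E *ᵥ (v + t • y)) =
        v ⬝ᵥ (E *ᵥ v) + 2 * t * (v ⬝ᵥ (E *ᵥ y)) + t ^ 2 * (y ⬝ᵥ (E *ᵥ y)) := by
      simp only [mulVec_add, mulVec_smul, add_dotProduct, dotProduct_add,
        dotProduct_smul, smul_dotProduct, smul_eq_mul]
      rw [hsymdot y v]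
      ring
    rw [hexp, hv] at this
    linarith
  funext i
  have := hc (fun j => if j = i then 1 else 0)
  have hdot : v ⬝ᵥ (E *ᵥ fun j => if j = i then 1 else 0) = (E *ᵥ v) i := by
    rw [hsymdot]
    simp [dotProduct]
  rw [hdot] at this
  simpa using this

theorem stmt12 (N : ℕ) (E : Matrix (Fin N) (Fin N) ℝ)
    (hsym : Eᵀ = E)
    (hnsd : ∀ y : Fin N → ℝ, y ⬝ᵥ (E *ᵥ y) ≤ 0)
    (vᵣ : Fin N → ℝ) (hvᵣpos : ∀ i, 0 < vᵣ i)
    (hker : ∀ y : Fin N → ℝ, E *ᵥ y = 0 ↔ ∃ α : ℝ, y = α • vᵣ)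
    (ε : ℝ) (hε : 0 < ε ∧ ε < 2)
    (V : (Fin N → ℝ) → ℝ)
    (hV : V = fun z => ∑ i, (-2 * z i - 2 * Real.log (1 - z i)))
    (x : ℝ → Fin N → ℝ)
    (hODE : ∀ t : ℝ, ∀ i, HasDerivAt (fun s => x s i)
      ((1/2) * (1 - x t i) * ((E *ᵥ x t) i)) t)
    (hS : ∀ t : ℝ, ∀ i, -1 ≤ x t i ∧ x t i ≤ 1 - ε) :
    ∀ t : ℝ,
      HasDerivAt (fun s => V (x s)) ((x t) ⬝ᵥ (E *ᵥ x t)) t ∧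
      (x t) ⬝ᵥ (E *ᵥ x t) ≤ 0 ∧
      ((x t) ⬝ᵥ (E *ᵥ x t) = 0 ↔ ∃ α : ℝ, x t = α • vᵣ) := by
  intro t
  refine ⟨?_, hnsd (x t), ?_⟩
  · -- derivative
    have hne : ∀ i, 1 - x t i ≠ 0 := by
      intro i
      have := (hS t i).2
      have := hε.1
      intro h; linarith [show (1:ℝ) - x t i = 0 from h]
    have hterm : ∀ i : Fin N, HasDerivAt (fun s => -2 * x s i - 2 * Real.log (1 - x s i))
        (x t i * (E *ᵥ x t) i) t := by
      intro i
      have h1 : HasDerivAt (fun s => -2 * x s i)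
          (-2 * ((1/2) * (1 - x t i) * ((E *ᵥ x t) i))) t := (hODE t i).const_mul (-2)
      have h2 : HasDerivAt (fun s => (1:ℝ) - x s i)
          (-((1/2) * (1 - x t i) * ((E *ᵥ x t) i))) t := (hODE t i).const_sub 1
      have h3 : HasDerivAt (fun s => Real.log (1 - x s i))
          (-((1/2) * (1 - x t i) * ((E *ᵥ x t) i)) / (1 - x t i)) t := h2.log (hne i)
      have h4 := h1.sub (h3.const_mul 2)
      have key : ∀ a e : ℝ, a ≠ 0 →
          -2 * (1/2 * a * e) - 2 * (-(1/2 * a * e) / a) = (1 - a) * e := by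
        intro a e ha; field_simp; ring
      refine h4.congr_deriv ?_
      rw [key (1 - x t i) ((E *ᵥ x t) i) (hne i)]
      ring
    have hsum : HasDerivAt (fun s => ∑ i, (-2 * x s i - 2 * Real.log (1 - x s i)))
        (∑ i, x t i * (E *ᵥ x t) i) t :=
      HasDerivAt.fun_sum (fun i _ => hterm i)
    rw [hV]
    convert hsum using 1
    rfl
  · constructor
    · intro h
      exact (hker (x t)).1 (aux_ker N E hsym hnsd (x t) h)
    · rintro ⟨α, hα⟩
      have : E *ᵥ x t = 0 := (hker (x t)).2 ⟨α, hα⟩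
      rw [this]
      simp
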